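/- Let d ≥ 1, let q > 0 and τ > 0, and let x_1, x_2, …, x_k ∈ ℝ^d be vectors with ‖x_s‖_2 ≤ 1 for all s ∈ [k]. For each s, set V_s = τ·I_d + Σ_{t=1}^{s} x_t x_tᵀ. Let J ⊆ [k] be the set of indices s for which x_sᵀ V_{s-1}^{-1} x_s ≥ q. Then |J| ≤ (2/ln(1+q)) · d · ln(1 + (2/e)/(ln(1+q)·τ)). -/

import Mathlib

open Matrix Finset

section Aux
variable {d : ℕ}


lemma mulVec_vecMulVec' (u y : Fin d → ℝ) :
    (Matrix.vecMulVec u u) *ᵥ y = (u ⬝ᵥ y) • u := by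
  ext i
  simp [vecMulVec_apply, mulVec, dotProduct, Finset.mul_sum, mul_comm, mul_left_comm]

lemma dot_vecMulVec (u y : Fin d → ℝ) :
    y ⬝ᵥ (Matrix.vecMulVec u u) *ᵥ y = (u ⬝ᵥ y) ^ 2 := by
  rw [mulVec_vecMulVec', dotProduct_smul, smul_eq_mul, dotProduct_comm]
  ring

lemma psd_vecMulVec (u : Fin d → ℝ) : (Matrix.vecMulVec u u).PosSemidef := by
  refine .of_dotProduct_mulVec_nonneg ?_ fun y => ?_
  · ext i j
    simp [vecMulVec_apply, conjTranspose_apply, mul_comm]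
  · simpa [dot_vecMulVec] using sq_nonneg (u ⬝ᵥ y)


lemma psd_sum (S : Finset ℕ) (x : ℕ → Fin d → ℝ) :
    (∑ t ∈ S, Matrix.vecMulVec (x t) (x t)).PosSemidef := by
  classical
  induction S using Finset.induction with
  | empty => simpa using Matrix.PosSemidef.zero
  | insert _ _ h ih =>
      rw [Finset.sum_insert h]
      exact (psd_vecMulVec _).add ih

lemma pd_smul_one {τ : ℝ} (hτ : 0 < τ) :
    (τ • (1 : Matrix (Fin d) (Fin d) ℝ)).PosDef := by
  rw [Matrix.smul_one_eq_diagonal]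
  exact Matrix.PosDef.diagonal fun _ => hτ

lemma inv_smul_one {τ : ℝ} (hτ : 0 < τ) :
    (τ • (1 : Matrix (Fin d) (Fin d) ℝ))⁻¹ = τ⁻¹ • 1 := by
  apply Matrix.inv_eq_right_inv
  rw [smul_mul_smul_comm, one_mul, mul_inv_cancel₀ hτ.ne', one_smul]


lemma dot_symm {M : Matrix (Fin d) (Fin d) ℝ} (hM : M.IsHermitian) (u v : Fin d → ℝ) :
    u ⬝ᵥ M *ᵥ v = v ⬝ᵥ M *ᵥ u := by
  have hMt : Mᵀ = M := by
    have := hM.eq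
    rwa [conjTranspose_eq_transpose_of_trivial] at this
  rw [Matrix.dotProduct_mulVec, ← vecMul_transpose, hMt, dotProduct_comm]

lemma psd_nonneg {M : Matrix (Fin d) (Fin d) ℝ} (hM : M.PosSemidef) (u : Fin d → ℝ) :
    0 ≤ u ⬝ᵥ M *ᵥ u := by
  simpa using hM.dotProduct_mulVec_nonneg u

/-- Anti-monotonicity of the inverse quadratic form: if `A ⪯ B` then `xᵀB⁻¹x ≤ xᵀA⁻¹x`. -/
lemma quad_inv_le {A B : Matrix (Fin d) (Fin d) ℝ} (hA : A.PosDef)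
    (hBA : (B - A).PosSemidef) (x : Fin d → ℝ) :
    x ⬝ᵥ B⁻¹ *ᵥ x ≤ x ⬝ᵥ A⁻¹ *ᵥ x := by
  have hB : B.PosDef := by
    have := hA.add_posSemidef hBA
    simpa using this
  set y := B⁻¹ *ᵥ x with hy
  set u := A⁻¹ *ᵥ x with hu
  have hBy : B *ᵥ y = x := by
    rw [hy, mulVec_mulVec, Matrix.mul_nonsing_inv _ (Matrix.isUnit_iff_isUnit_det _ |>.1 hB.isUnit), one_mulVec]
  have hAu : A *ᵥ u = x := by
    rw [hu, mulVec_mulVec, Matrix.mul_nonsing_inv _ (Matrix.isUnit_iff_isUnit_det _ |>.1 hA.isUnit), one_mulVec]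
  -- 0 ≤ (y-u)ᵀ A (y-u) = yᵀAy - 2 xᵀy + xᵀu
  have key : 0 ≤ y ⬝ᵥ A *ᵥ y - 2 * (x ⬝ᵥ y) + x ⬝ᵥ u := by
    have h0 := psd_nonneg hA.posSemidef (y - u)
    have e1 : (y - u) ⬝ᵥ A *ᵥ (y - u)
        = y ⬝ᵥ A *ᵥ y - y ⬝ᵥ A *ᵥ u - u ⬝ᵥ A *ᵥ y + u ⬝ᵥ A *ᵥ u := by
      rw [mulVec_sub, dotProduct_sub, sub_dotProduct, sub_dotProduct]
      ring
    rw [e1, hAu, dot_symm hA.isHermitian u y] at h0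
    rw [show y ⬝ᵥ A *ᵥ u = y ⬝ᵥ x from by rw [hAu]] at h0
    have e2 : u ⬝ᵥ x = x ⬝ᵥ u := dotProduct_comm _ _
    have e3 : y ⬝ᵥ x = x ⬝ᵥ y := dotProduct_comm _ _
    nlinarith [h0]
  have hyAy : y ⬝ᵥ A *ᵥ y ≤ x ⬝ᵥ y := by
    have h1 := psd_nonneg hBA y
    have e1 : y ⬝ᵥ (B - A) *ᵥ y = y ⬝ᵥ B *ᵥ y - y ⬝ᵥ A *ᵥ y := by
      rw [sub_mulVec, dotProduct_sub]
    rw [e1, hBy] at h1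
    have := dotProduct_comm y x
    linarith
  linarith


lemma det_step {M : Matrix (Fin d) (Fin d) ℝ} (hM : M.PosDef) (u : Fin d → ℝ) :
    (M + Matrix.vecMulVec u u).det = M.det * (1 + u ⬝ᵥ M⁻¹ *ᵥ u) := by
  rw [vecMulVec_eq Unit, Matrix.det_add_replicateCol_mul_replicateRow (by exact hM.det_pos.ne'.isUnit) u u]
  congr 1
  rw [det_unique, Matrix.dotProduct_mulVec]
  simp [Matrix.mul_apply, Matrix.replicateRow, Matrix.replicateCol, vecMul, dotProduct]

-- trace of vecMulVec
lemma trace_vecMulVec (u : Fin d → ℝ) : (Matrix.vecMulVec u u).trace = u ⬝ᵥ u := by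
  simp [Matrix.trace, Matrix.diag, vecMulVec_apply, dotProduct]

-- trace = sum of eigenvalues
lemma trace_eq_sum_eigs {M : Matrix (Fin d) (Fin d) ℝ} (hM : M.IsHermitian) :
    M.trace = ∑ i, hM.eigenvalues i := by
  simpa using hM.trace_eq_sum_eigenvalues


lemma det_le_pow {M : Matrix (Fin d) (Fin d) ℝ} (hd : 1 ≤ d) (hM : M.PosDef) :
    M.det ≤ (M.trace / d) ^ d := by
  have hd0 : (d : ℝ) ≠ 0 := Nat.cast_ne_zero.2 (by omega)
  set lam := hM.isHermitian.eigenvalues with hlam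
  have hpos : ∀ i, 0 < lam i := hM.eigenvalues_pos
  have hdet : M.det = ∏ i, lam i := by
    have := hM.isHermitian.det_eq_prod_eigenvalues
    simpa using this
  have htr : M.trace = ∑ i, lam i := trace_eq_sum_eigs hM.isHermitian
  have hamgm := Real.geom_mean_le_arith_mean_weighted Finset.univ
    (fun _ : Fin d => 1 / (d : ℝ)) lam (fun i _ => by positivity)
    (by simp [Finset.sum_const, hd0]) (fun i _ => (hpos i).le)
  -- hamgm : ∏ i, lam i ^ (1/d : ℝ) ≤ ∑ i, (1/d) * lam i
  have hP : (∏ i, lam i ^ ((1:ℝ) / d)) ^ d = ∏ i, lam i := by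
    rw [← Finset.prod_pow]
    refine Finset.prod_congr rfl fun i _ => ?_
    rw [← Real.rpow_natCast (lam i ^ ((1:ℝ)/d)) d, ← Real.rpow_mul (hpos i).le]
    rw [one_div, inv_mul_cancel₀ hd0, Real.rpow_one]
  have hRHS : ∑ i, 1 / (d:ℝ) * lam i = M.trace / d := by
    rw [htr, Finset.sum_div]
    exact Finset.sum_congr rfl fun i _ => by ring
  calc M.det = (∏ i, lam i ^ ((1:ℝ)/d)) ^ d := by rw [hP, hdet]
    _ ≤ (M.trace / d) ^ d := by
        refine pow_le_pow_left₀ (Finset.prod_nonneg fun i _ => Real.rpow_nonneg (hpos i).le _) ?_ d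
        rw [← hRHS]; exact hamgm

lemma exp_le_one_add_es {s : ℝ} (h0 : 0 ≤ s) (h1 : s ≤ 1) :
    Real.exp s ≤ 1 + Real.exp 1 * s := by
  have hc := convexOn_exp.2 (Set.mem_univ (0:ℝ)) (Set.mem_univ (1:ℝ))
    (by linarith : (0:ℝ) ≤ 1 - s) h0 (by ring)
  simp only [smul_eq_mul, mul_zero, mul_one, zero_add, Real.exp_zero] at hc
  nlinarith [Real.exp_pos 1, hc]

lemma log_tangent {y s : ℝ} (hy : 0 < y) (hs : 0 < s) :
    Real.log y ≤ s * y - 1 - Real.log s := by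
  have h := Real.log_le_sub_one_of_pos (mul_pos hs hy)
  rw [Real.log_mul hs.ne' hy.ne'] at h
  linarith

lemma scalar_final (d m : ℕ) (hd : 1 ≤ d) (q τ : ℝ) (hq : 0 < q) (hτ : 0 < τ)
    (hqτ : m ≠ 0 → q * τ ≤ 1)
    (hdet : τ ^ d * (1 + q) ^ m ≤ (τ + m / d) ^ d) :
    (m : ℝ) ≤ 2 / Real.log (1 + q) * d
        * Real.log (1 + (2 / Real.exp 1) / (Real.log (1 + q) * τ)) := by
  set c := Real.log (1 + q) with hc
  have hcpos : 0 < c := Real.log_pos (by linarith)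
  have harg : 0 < (2 / Real.exp 1) / (c * τ) := by positivity
  rcases Nat.eq_zero_or_pos m with hm | hm
  · rw [hm]
    push_cast
    have h1 : (0:ℝ) ≤ 2 / c * d := by positivity
    have h2 : (0:ℝ) ≤ Real.log (1 + (2 / Real.exp 1) / (c * τ)) :=
      Real.log_nonneg (by linarith)
    positivity
  have hqτ1 : q * τ ≤ 1 := hqτ (by omega)
  have hd0 : (0:ℝ) < d := by exact_mod_cast hd
  have hm0 : (0:ℝ) < m := by exact_mod_cast hm
  -- take logs
  have hlog : (d:ℝ) * Real.log τ + m * c ≤ d * Real.log (τ + m / d) := by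
    have hL : (0:ℝ) < τ ^ d * (1 + q) ^ m := by positivity
    have := Real.log_le_log hL hdet
    rw [Real.log_mul (by positivity) (by positivity), Real.log_pow] at this
    rw [Real.log_pow, Real.log_pow] at this
    push_cast at this
    linarith
  have hsplit : Real.log (τ + (m:ℝ) / d) = Real.log τ + Real.log (1 + m / (d * τ)) := by
    rw [← Real.log_mul hτ.ne' (by positivity)]
    congr 1
    field_simp
  have hkey : (m:ℝ) * c ≤ d * Real.log (1 + m / (d * τ)) := by
    rw [hsplit] at hlog
    nlinarith
  set s := c * τ / 2 with hs
  have hspos : 0 < s := by positivity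
  have hs1 : s ≤ 1 / 2 := by
    have hcq : c ≤ q := by
      have := Real.log_le_sub_one_of_pos (show (0:ℝ) < 1 + q by linarith)
      simpa using this
    have : c * τ ≤ q * τ := by nlinarith
    nlinarith
  -- tangent bound
  have htan := log_tangent (show (0:ℝ) < 1 + m / (d * τ) by positivity) hspos
  have hstep : (m:ℝ) * c / 2 ≤ d * (s - 1 - Real.log s) := by
    have h1 : (d:ℝ) * Real.log (1 + m / (d * τ)) ≤ d * (s * (1 + m / (d*τ)) - 1 - Real.log s) := by
      exact mul_le_mul_of_nonneg_left htan hd0.le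
    have h2 : (d:ℝ) * (s * (1 + ↑m / (d*τ)) - 1 - Real.log s)
        = d * (s - 1 - Real.log s) + c / 2 * m := by
      field_simp [hs] <;> ring
    nlinarith [hkey]
  -- final: s - 1 - log s ≤ log (1 + 1/(e s))
  have hfin : s - 1 - Real.log s ≤ Real.log (1 + (2 / Real.exp 1) / (c * τ)) := by
    have he : (0:ℝ) < Real.exp 1 := Real.exp_pos 1
    have h1 : (1:ℝ) + (2 / Real.exp 1) / (c * τ) = 1 + 1 / (Real.exp 1 * s) := by
      rw [hs]; field_simp <;> ring
    rw [h1]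
    have hexps : Real.exp s ≤ 1 + Real.exp 1 * s := exp_le_one_add_es hspos.le (by linarith)
    have h2 : s ≤ Real.log (1 + Real.exp 1 * s) := by
      have := Real.log_le_log (Real.exp_pos s) hexps
      rwa [Real.log_exp] at this
    have h3 : Real.log (1 + 1 / (Real.exp 1 * s))
        = Real.log (1 + Real.exp 1 * s) - 1 - Real.log s := by
      rw [show (1:ℝ) + 1 / (Real.exp 1 * s) = (1 + Real.exp 1 * s) / (Real.exp 1 * s) by
        field_simp; ring]
      rw [Real.log_div (by positivity) (by positivity),
        Real.log_mul he.ne' hspos.ne', Real.log_exp]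
      ring
    rw [h3]
    linarith
  -- combine
  have : (m:ℝ) ≤ 2 / c * (d * (s - 1 - Real.log s)) := by
    rw [div_mul_eq_mul_div, le_div_iff₀ hcpos]
    linarith
  calc (m:ℝ) ≤ 2 / c * (d * (s - 1 - Real.log s)) := this
    _ ≤ 2 / c * (d * Real.log (1 + (2 / Real.exp 1) / (c * τ))) := by
        refine mul_le_mul_of_nonneg_left (mul_le_mul_of_nonneg_left hfin hd0.le) (by positivity)
    _ = 2 / c * d * Real.log (1 + (2 / Real.exp 1) / (c * τ)) := by ring

end Aux

theorem elliptical_potential_count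
    (d k : ℕ) (hd : 1 ≤ d) (q τ : ℝ) (hq : 0 < q) (hτ : 0 < τ)
    (x : ℕ → EuclideanSpace ℝ (Fin d))
    (hx : ∀ s ∈ Finset.Icc 1 k, ‖x s‖ ≤ 1)
    (V : ℕ → Matrix (Fin d) (Fin d) ℝ)
    (hV : ∀ s, V s = τ • (1 : Matrix (Fin d) (Fin d) ℝ)
        + ∑ t ∈ Finset.Icc 1 s, Matrix.vecMulVec (x t) (x t))
    (J : Finset ℕ)
    (hJ : J = (Finset.Icc 1 k).filter (fun s => q ≤ x s ⬝ᵥ (V (s - 1))⁻¹ *ᵥ x s)) :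
    (J.card : ℝ) ≤ 2 / Real.log (1 + q) * d
        * Real.log (1 + (2 / Real.exp 1) / (Real.log (1 + q) * τ)) := by
  classical
  set m := J.card with hm
  have hJsub : J ⊆ Finset.Icc 1 k := by rw [hJ]; exact Finset.filter_subset _ _
  have hJq : ∀ s ∈ J, q ≤ x s ⬝ᵥ (V (s - 1))⁻¹ *ᵥ x s := by
    intro s hs; rw [hJ] at hs; exact (Finset.mem_filter.1 hs).2
  have hdot0 : ∀ t, (0:ℝ) ≤ x t ⬝ᵥ x t :=
    fun t => Finset.sum_nonneg fun i _ => mul_self_nonneg _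
  have hdot : ∀ t ∈ Finset.Icc 1 k, (x t : Fin d → ℝ) ⬝ᵥ x t ≤ 1 := by
    intro t ht
    have hsq : (x t : Fin d → ℝ) ⬝ᵥ x t = ‖x t‖ ^ 2 := by
      rw [EuclideanSpace.norm_eq, Real.sq_sqrt (by positivity)]
      simp [dotProduct, Real.norm_eq_abs, sq_abs, sq]
    rw [hsq]
    have := hx t ht
    nlinarith [norm_nonneg (x t)]
  set W : ℕ → Matrix (Fin d) (Fin d) ℝ := fun s =>
    τ • 1 + ∑ t ∈ J.filter (· ≤ s), Matrix.vecMulVec (x t) (x t) with hW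
  have hWpd : ∀ s, (W s).PosDef := fun s => (pd_smul_one hτ).add_posSemidef (psd_sum _ _)
  have hsub2 : ∀ s, J.filter (· ≤ s) ⊆ Finset.Icc 1 s := by
    intro s t ht
    have h1 := Finset.mem_filter.1 ht
    have h2 := Finset.mem_Icc.1 (hJsub h1.1)
    exact Finset.mem_Icc.2 ⟨h2.1, h1.2⟩
  have hVW : ∀ s, (V s - W s).PosSemidef := by
    intro s
    have hs := Finset.sum_sdiff (hsub2 s) (f := fun t => Matrix.vecMulVec (x t) (x t))
    have heq : V s - W s
        = ∑ t ∈ Finset.Icc 1 s \ J.filter (· ≤ s), Matrix.vecMulVec (x t) (x t) := by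
      rw [hV s]
      simp only [hW]
      rw [← hs]
      abel
    rw [heq]; exact psd_sum _ _
  have hq' : ∀ s, s + 1 ∈ J → q ≤ (x (s+1) : Fin d → ℝ) ⬝ᵥ (W s)⁻¹ *ᵥ x (s+1) := by
    intro s hs
    have h1 := hJq _ hs
    rw [Nat.add_sub_cancel] at h1
    exact h1.trans (quad_inv_le (hWpd s) (hVW s) _)
  have hind : ∀ s, τ ^ d * (1+q) ^ ((J.filter (· ≤ s)).card) ≤ (W s).det := by
    intro s
    induction s with
    | zero =>
      have he : J.filter (· ≤ 0) = ∅ := by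
        refine Finset.eq_empty_of_forall_notMem fun t ht => ?_
        have h1 := Finset.mem_filter.1 ht
        have h2 := Finset.mem_Icc.1 (hJsub h1.1)
        omega
      have hW0 : W 0 = τ • 1 := by simp only [hW, he, Finset.sum_empty, add_zero]
      rw [he, hW0, Matrix.smul_one_eq_diagonal, Matrix.det_diagonal]
      simp
    | succ s ih =>
      by_cases hmem : s + 1 ∈ J
      · have hnot : s + 1 ∉ J.filter (· ≤ s) := fun h => by
          have := (Finset.mem_filter.1 h).2; omega
        have hfil : J.filter (· ≤ s + 1) = insert (s+1) (J.filter (· ≤ s)) := by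
          ext t
          simp only [Finset.mem_filter, Finset.mem_insert]
          constructor
          · rintro ⟨ht, hle⟩
            rcases eq_or_ne t (s+1) with rfl | hne
            · exact Or.inl rfl
            · exact Or.inr ⟨ht, by omega⟩
          · rintro (rfl | ⟨ht, hle⟩)
            · exact ⟨hmem, le_refl _⟩
            · exact ⟨ht, by omega⟩
        have hWs : W (s+1) = W s + Matrix.vecMulVec (x (s+1)) (x (s+1)) := by
          simp only [hW, hfil]
          rw [Finset.sum_insert hnot]
          abel
        rw [hWs, det_step (hWpd s), hfil, Finset.card_insert_of_notMem hnot, pow_succ]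
        have h1q : (1:ℝ) + q ≤ 1 + (x (s+1) : Fin d → ℝ) ⬝ᵥ (W s)⁻¹ *ᵥ x (s+1) := by
          linarith [hq' s hmem]
        calc τ ^ d * ((1+q) ^ (J.filter (· ≤ s)).card * (1+q))
            = (τ ^ d * (1+q) ^ (J.filter (· ≤ s)).card) * (1+q) := by ring
          _ ≤ (W s).det * (1 + (x (s+1) : Fin d → ℝ) ⬝ᵥ (W s)⁻¹ *ᵥ x (s+1)) :=
              mul_le_mul ih h1q (by positivity) (hWpd s).det_pos.le
      · have hfil : J.filter (· ≤ s + 1) = J.filter (· ≤ s) := by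
          ext t
          simp only [Finset.mem_filter]
          constructor
          · rintro ⟨ht, hle⟩
            have : t ≠ s + 1 := fun e => hmem (e ▸ ht)
            exact ⟨ht, by omega⟩
          · rintro ⟨ht, hle⟩
            exact ⟨ht, by omega⟩
        have hWs : W (s+1) = W s := by simp only [hW, hfil]
        rw [hWs, hfil]
        exact ih
  have hJk : J.filter (· ≤ k) = J :=
    Finset.filter_true_of_mem fun t ht => (Finset.mem_Icc.1 (hJsub ht)).2
  have hlb : τ ^ d * (1+q) ^ m ≤ (W k).det := by
    have := hind k
    rwa [hJk] at this
  have htr : (W k).trace ≤ τ * d + m := by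
    have h1 : (W k).trace = τ * d + ∑ t ∈ J.filter (· ≤ k), (x t : Fin d → ℝ) ⬝ᵥ x t := by
      simp only [hW]
      rw [Matrix.trace_add, Matrix.trace_smul, Matrix.trace_one, Matrix.trace_sum]
      simp only [_root_.trace_vecMulVec, smul_eq_mul, Fintype.card_fin]
    rw [h1, hJk]
    have h2 : ∑ t ∈ J, (x t : Fin d → ℝ) ⬝ᵥ x t ≤ ∑ t ∈ J, (1:ℝ) :=
      Finset.sum_le_sum fun t ht => hdot t (hJsub ht)
    rw [Finset.sum_const, nsmul_eq_mul, mul_one] at h2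
    linarith
  have htrpos : 0 < (W k).trace := by
    rw [trace_eq_sum_eigs (hWpd k).isHermitian]
    refine Finset.sum_pos (fun i _ => (hWpd k).eigenvalues_pos i) ?_
    exact Finset.univ_nonempty_iff.2 (by exact ⟨⟨0, by omega⟩⟩)
  have hub : (W k).det ≤ (τ + m / d) ^ d := by
    refine (det_le_pow hd (hWpd k)).trans ?_
    have hd0 : (0:ℝ) < d := by exact_mod_cast hd
    refine pow_le_pow_left₀ (by positivity) ?_ d
    rw [div_le_iff₀ hd0]
    have : (τ + (m:ℝ) / d) * d = τ * d + m := by field_simp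
    linarith
  have hqτ : m ≠ 0 → q * τ ≤ 1 := by
    intro hm0
    have hne : J.Nonempty := Finset.card_pos.1 (by omega)
    obtain ⟨s, hs⟩ := hne
    have h1 := hJq s hs
    have hsIcc := hJsub hs
    have hps : (V (s-1) - τ • 1).PosSemidef := by
      rw [hV]
      simpa using psd_sum (Finset.Icc 1 (s-1)) (fun t => (x t : Fin d → ℝ))
    have h2 : x s ⬝ᵥ (V (s-1))⁻¹ *ᵥ x s
        ≤ (x s : Fin d → ℝ) ⬝ᵥ (τ • (1 : Matrix (Fin d) (Fin d) ℝ))⁻¹ *ᵥ x s :=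
      quad_inv_le (pd_smul_one hτ) hps _
    rw [inv_smul_one hτ] at h2
    have h3 : (x s : Fin d → ℝ) ⬝ᵥ (τ⁻¹ • (1 : Matrix (Fin d) (Fin d) ℝ)) *ᵥ x s
        = τ⁻¹ * ((x s : Fin d → ℝ) ⬝ᵥ x s) := by
      rw [Matrix.smul_mulVec, Matrix.one_mulVec, dotProduct_smul, smul_eq_mul]
    rw [h3] at h2
    have h4 := hdot s hsIcc
    have h5 : τ⁻¹ * ((x s : Fin d → ℝ) ⬝ᵥ x s) ≤ τ⁻¹ := by
      have := inv_pos.2 hτ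
      nlinarith
    have h6 : q ≤ τ⁻¹ := le_trans (h1.trans h2) h5
    calc q * τ ≤ τ⁻¹ * τ := by nlinarith
      _ = 1 := inv_mul_cancel₀ hτ.ne'
  exact scalar_final d m hd q τ hq hτ hqτ (hlb.trans hub)
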